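/- Fix a prime p and a probability distribution P on (ℤ/pℤ)². Let |Ψ⟩ := Σ_{(x,z)} √(P(x,z)) (W(x,z) ⊗ I)|Φ⟩_{AB} ⊗ |x,z⟩_E ∈ ℂ^p ⊗ ℂ^p ⊗ ℂ^{p²} and ω_{AE} := Tr_B |Ψ⟩⟨Ψ|. Then for every t > 0, H̃_{1+t}^{↑}(A|E|ω_{AE}) ≥ log₂ p − H_{1/(1+t)}(P), where H_{1/(1+t)}(P) := ((1+t)/t) log₂ Σ_{x,z} P(x,z)^{1/(1+t)} is the classical Rényi entropy of order 1/(1+t). -/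

import Mathlib

open scoped Kronecker ComplexOrder
open Matrix

noncomputable section

/-- Real power of a Hermitian matrix via functional calculus (junk value `0` otherwise). -/
def Matrix.hpow {n : Type*} [Fintype n] [DecidableEq n] (A : Matrix n n ℂ) (r : ℝ) :
    Matrix n n ℂ :=
  if hA : A.IsHermitian then
    (hA.eigenvectorUnitary : Matrix n n ℂ) *
      Matrix.diagonal (fun i => ((hA.eigenvalues i ^ r : ℝ) : ℂ)) *
      (hA.eigenvectorUnitary : Matrix n n ℂ)ᴴ
  else 0

/-- Trace norm ‖A‖₁ = Tr √(AᴴA). -/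
def Matrix.traceNorm {n : Type*} [Fintype n] [DecidableEq n] (A : Matrix n n ℂ) : ℝ :=
  ((Aᴴ * A).hpow (1/2)).trace.re

/-- Density matrix predicate. -/
def IsDensity {n : Type*} [Fintype n] (ρ : Matrix n n ℂ) : Prop :=
  ρ.PosSemidef ∧ ρ.trace = 1

/-- Probability distribution on a finite type. -/
def IsProbDist {X : Type*} [Fintype X] (Q : X → ℝ) : Prop :=
  (∀ x, 0 ≤ Q x) ∧ ∑ x, Q x = 1

/-- Tr[(σ^{−t/(2(1+t))} ρ σ^{−t/(2(1+t))})^{1+t}]. -/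
def sandwichTr {n : Type*} [Fintype n] [DecidableEq n] (t : ℝ) (ρ σ : Matrix n n ℂ) : ℝ :=
  (((σ.hpow (-(t / (2 * (1 + t)))) * ρ * σ.hpow (-(t / (2 * (1 + t))))).hpow (1 + t)).trace).re

/-- Ĩ_{1+t}^{↓}(X;E|W×Q), infimum over positive definite density matrices. -/
def ItildeDown {X n : Type*} [Fintype X] [Fintype n] [DecidableEq n]
    (t : ℝ) (W : X → Matrix n n ℂ) (Q : X → ℝ) : ℝ :=
  ⨅ σ : {σ : Matrix n n ℂ // σ.PosDef ∧ σ.trace = 1},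
    (1 / t) * Real.logb 2 (∑ x, Q x * sandwichTr t (W x) σ.1)

/-- The uniform classical state on a finite type. -/
def uniformState (T : Type*) [Fintype T] [DecidableEq T] : Matrix T T ℂ :=
  (Fintype.card T : ℂ)⁻¹ • 1


/-- The generalized Pauli `X` (shift) matrix on `ℂ^p`. -/
def Xmat (p : ℕ) [NeZero p] : Matrix (ZMod p) (ZMod p) ℂ :=
  Matrix.of fun j k => if j = k + 1 then 1 else 0

/-- The root of unity `ω = exp(2πi/p)`. -/
def omeg (p : ℕ) : ℂ := Complex.exp (2 * Real.pi * Complex.I / p)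

/-- The generalized Pauli `Z` (phase) matrix on `ℂ^p`. -/
def Zmat (p : ℕ) [NeZero p] : Matrix (ZMod p) (ZMod p) ℂ :=
  Matrix.diagonal fun j => omeg p ^ j.val

/-- The Weyl operator `W(x,z) = X^x Z^z`. -/
def WeylOp (p : ℕ) [NeZero p] (x z : ZMod p) : Matrix (ZMod p) (ZMod p) ℂ :=
  Xmat p ^ x.val * Zmat p ^ z.val

/-- The maximally entangled vector `|Φ⟩ = (1/√p) Σ_j |j⟩⊗|j⟩`. -/
def BellVec (p : ℕ) [NeZero p] : ZMod p × ZMod p → ℂ :=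
  fun jk => if jk.1 = jk.2 then ((Real.sqrt p : ℝ) : ℂ)⁻¹ else 0

/-- The projector `|Φ⟩⟨Φ|` onto the maximally entangled state. -/
def BellProj (p : ℕ) [NeZero p] : Matrix (ZMod p × ZMod p) (ZMod p × ZMod p) ℂ :=
  Matrix.vecMulVec (BellVec p) (star (BellVec p))

/-- The Bell-diagonal state `ρ[Q]`. -/
def bellDiag (p : ℕ) [NeZero p] (Q : ZMod p × ZMod p → ℝ) :
    Matrix (ZMod p × ZMod p) (ZMod p × ZMod p) ℂ :=
  ∑ xz : ZMod p × ZMod p, (Q xz : ℂ) •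
    ((WeylOp p xz.1 xz.2 ⊗ₖ (1 : Matrix (ZMod p) (ZMod p) ℂ)) * BellProj p *
      (WeylOp p xz.1 xz.2 ⊗ₖ (1 : Matrix (ZMod p) (ZMod p) ℂ))ᴴ)

/-- Partial trace over the first tensor factor. -/
def ptraceFst {a b : Type*} [Fintype a] (ρ : Matrix (a × b) (a × b) ℂ) : Matrix b b ℂ :=
  Matrix.of fun i j => ∑ k, ρ (k, i) (k, j)

/-- Partial trace over the second tensor factor. -/
def ptraceSnd {a b : Type*} [Fintype b] (ρ : Matrix (a × b) (a × b) ℂ) : Matrix a a ℂ :=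
  Matrix.of fun i j => ∑ k, ρ (i, k) (j, k)

/-- Petz Rényi divergence `D_{1−t}(ρ‖σ) = (−1/t) log₂ Tr[ρ^{1−t} σ^{t}]`. -/
def DPetzOneSub {n : Type*} [Fintype n] [DecidableEq n] (t : ℝ) (ρ σ : Matrix n n ℂ) : ℝ :=
  (-(1 / t)) * Real.logb 2 ((ρ.hpow (1 - t) * σ.hpow t).trace.re)

/-- Petz Rényi mutual information `I_{1−t}^{↑}(X;B|W×Q) = D_{1−t}(ρ_{XB}‖ρ_X ⊗ ρ_B)`. -/
def IupPetzOneSub {X n : Type*} [Fintype X] [DecidableEq X] [Fintype n] [DecidableEq n]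
    (t : ℝ) (W : X → Matrix n n ℂ) (Q : X → ℝ) : ℝ :=
  DPetzOneSub t
    (∑ x, (Q x : ℂ) • (Matrix.single x x (1 : ℂ) ⊗ₖ W x))
    ((∑ x, (Q x : ℂ) • Matrix.single x x (1 : ℂ)) ⊗ₖ (∑ x, (Q x : ℂ) • W x))

/-- Conditional Petz Rényi entropy `H_{1−t}^{↓}(A|B|ρ_{AB}) = −D_{1−t}(ρ_{AB}‖I_A ⊗ ρ_B)`. -/
def HdownPetzOneSub {a b : Type*} [Fintype a] [DecidableEq a] [Fintype b] [DecidableEq b]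
    (t : ℝ) (ρAB : Matrix (a × b) (a × b) ℂ) : ℝ :=
  -(DPetzOneSub t ρAB ((1 : Matrix a a ℂ) ⊗ₖ ptraceFst ρAB))

/-- Sandwiched Rényi divergence `D̃_{1+t}(ρ‖σ)`. -/
def Dtilde {n : Type*} [Fintype n] [DecidableEq n] (t : ℝ) (ρ σ : Matrix n n ℂ) : ℝ :=
  (1 / t) * Real.logb 2 (sandwichTr t ρ σ)

/-- Conditional sandwiched Rényi entropy
`H̃_{1+t}^{↑}(A|E|ρ_{AE}) = − inf_{σ_E > 0} D̃_{1+t}(ρ_{AE}‖I_A ⊗ σ_E)`. -/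
def HtildeUp {a e : Type*} [Fintype a] [DecidableEq a] [Fintype e] [DecidableEq e]
    (t : ℝ) (ρAE : Matrix (a × e) (a × e) ℂ) : ℝ :=
  -(⨅ σ : {σ : Matrix e e ℂ // σ.PosDef ∧ σ.trace = 1},
      Dtilde t ρAE ((1 : Matrix a a ℂ) ⊗ₖ σ.1))

/-- The purification `|Ψ⟩ = Σ_{x,z} √P(x,z) (W(x,z)⊗I)|Φ⟩ ⊗ |x,z⟩` as a vector on
`ℂ^p ⊗ ℂ^p ⊗ ℂ^{p²}`. -/
def PsiVec (p : ℕ) [NeZero p] (P : ZMod p × ZMod p → ℝ) :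
    ZMod p × ZMod p × (ZMod p × ZMod p) → ℂ :=
  fun abe => ((Real.sqrt (P abe.2.2) : ℝ) : ℂ) *
    ((WeylOp p abe.2.2.1 abe.2.2.2 ⊗ₖ (1 : Matrix (ZMod p) (ZMod p) ℂ)).mulVec
      (BellVec p)) (abe.1, abe.2.1)


section AuxFC

variable {n : Type*} [Fintype n] [DecidableEq n]

private lemma diag_real_conjT (d : n → ℝ) :
    (Matrix.diagonal (fun i => ((d i : ℝ) : ℂ)))ᴴ = Matrix.diagonal (fun i => ((d i : ℝ) : ℂ)) := by
  ext i j
  rcases eq_or_ne i j with h | h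
  · subst h; simp [Matrix.conjTranspose_apply, Complex.conj_ofReal]
  · simp [Matrix.conjTranspose_apply, Matrix.diagonal_apply_ne _ h, Matrix.diagonal_apply_ne _ (Ne.symm h), h]

private lemma isHermitian_decomp (V : Matrix n n ℂ) (d : n → ℝ) :
    (V * Matrix.diagonal (fun i => ((d i : ℝ) : ℂ)) * Vᴴ).IsHermitian := by
  unfold Matrix.IsHermitian
  rw [Matrix.conjTranspose_mul, Matrix.conjTranspose_mul, Matrix.conjTranspose_conjTranspose,
    diag_real_conjT, Matrix.mul_assoc]

private lemma interchange (U : Matrix n n ℂ) (d e : n → ℝ) (g : ℝ → ℝ)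
    (h : U * Matrix.diagonal (fun i => ((d i : ℝ) : ℂ))
        = Matrix.diagonal (fun i => ((e i : ℝ) : ℂ)) * U) :
    U * Matrix.diagonal (fun i => ((g (d i) : ℝ) : ℂ))
      = Matrix.diagonal (fun i => ((g (e i) : ℝ) : ℂ)) * U := by
  ext i j
  have h' : (U * Matrix.diagonal (fun i => ((d i : ℝ) : ℂ))) i j
      = (Matrix.diagonal (fun i => ((e i : ℝ) : ℂ)) * U) i j := by rw [h]
  rw [Matrix.mul_diagonal, Matrix.diagonal_mul] at h'
  rw [Matrix.mul_diagonal, Matrix.diagonal_mul]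
  rcases eq_or_ne (U i j) 0 with h0 | h0
  · simp [h0]
  · have hde : d j = e i := by
      have : U i j * (d j : ℂ) = U i j * (e i : ℂ) := by rw [h']; ring
      exact_mod_cast mul_left_cancel₀ h0 this
    rw [hde]
    ring

private lemma hpow_of_decomp {A : Matrix n n ℂ} (V : Matrix n n ℂ)
    (hV : V ∈ Matrix.unitaryGroup n ℂ) (d : n → ℝ)
    (hdec : A = V * Matrix.diagonal (fun i => ((d i : ℝ) : ℂ)) * Vᴴ) (r : ℝ) :
    A.hpow r = V * Matrix.diagonal (fun i => ((d i ^ r : ℝ) : ℂ)) * Vᴴ := by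
  have hA : A.IsHermitian := hdec ▸ isHermitian_decomp V d
  set U : Matrix n n ℂ := (hA.eigenvectorUnitary : Matrix n n ℂ) with hUdef
  have hUU : Uᴴ * U = 1 := by
    rw [← Matrix.star_eq_conjTranspose]
    exact Matrix.mem_unitaryGroup_iff'.mp hA.eigenvectorUnitary.2
  have hUU' : U * Uᴴ = 1 := by
    rw [← Matrix.star_eq_conjTranspose]
    exact Matrix.mem_unitaryGroup_iff.mp hA.eigenvectorUnitary.2
  have hVV : Vᴴ * V = 1 := by
    rw [← Matrix.star_eq_conjTranspose]; exact Matrix.mem_unitaryGroup_iff'.mp hV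
  have hVV' : V * Vᴴ = 1 := by
    rw [← Matrix.star_eq_conjTranspose]; exact Matrix.mem_unitaryGroup_iff.mp hV
  have hspec : A = U * Matrix.diagonal (fun i => ((hA.eigenvalues i : ℝ) : ℂ)) * Uᴴ := by
    simpa [Function.comp_def, Matrix.star_eq_conjTranspose] using hA.spectral_theorem
  set W : Matrix n n ℂ := Uᴴ * V with hW
  have hWk : W * Matrix.diagonal (fun i => ((d i : ℝ) : ℂ))
      = Matrix.diagonal (fun i => ((hA.eigenvalues i : ℝ) : ℂ)) * W := by
    have h1 : Uᴴ * A * V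
        = W * Matrix.diagonal (fun i => ((d i : ℝ) : ℂ)) := by
      rw [hdec]
      calc Uᴴ * (V * Matrix.diagonal (fun i => ((d i : ℝ) : ℂ)) * Vᴴ) * V
          = Uᴴ * V * Matrix.diagonal (fun i => ((d i : ℝ) : ℂ)) * (Vᴴ * V) := by
            simp only [Matrix.mul_assoc]
        _ = W * Matrix.diagonal (fun i => ((d i : ℝ) : ℂ)) := by rw [hVV, Matrix.mul_one, hW]
    have h2 : Uᴴ * A * V
        = Matrix.diagonal (fun i => ((hA.eigenvalues i : ℝ) : ℂ)) * W := by
      conv_lhs => rw [hspec]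
      calc Uᴴ * (U * Matrix.diagonal (fun i => ((hA.eigenvalues i : ℝ) : ℂ)) * Uᴴ) * V
          = (Uᴴ * U) * Matrix.diagonal (fun i => ((hA.eigenvalues i : ℝ) : ℂ)) * (Uᴴ * V) := by
            simp only [Matrix.mul_assoc]
        _ = Matrix.diagonal (fun i => ((hA.eigenvalues i : ℝ) : ℂ)) * W := by
            rw [hUU, Matrix.one_mul, hW]
    exact h1.symm.trans h2
  have hWr := interchange W d hA.eigenvalues (fun x => x ^ r) hWk
  have hUW : U * W = V := by
    rw [hW, ← Matrix.mul_assoc, hUU', Matrix.one_mul]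
  have key : U * Matrix.diagonal (fun i => ((hA.eigenvalues i ^ r : ℝ) : ℂ)) * Uᴴ
      = V * Matrix.diagonal (fun i => ((d i ^ r : ℝ) : ℂ)) * Vᴴ := by
    have hWr' : W * Matrix.diagonal (fun i => ((d i ^ r : ℝ) : ℂ))
        = Matrix.diagonal (fun i => ((hA.eigenvalues i ^ r : ℝ) : ℂ)) * W := hWr
    have hWV : W * Vᴴ = Uᴴ := by
      rw [hW, Matrix.mul_assoc, hVV', Matrix.mul_one]
    calc U * Matrix.diagonal (fun i => ((hA.eigenvalues i ^ r : ℝ) : ℂ)) * Uᴴ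
        = U * ((Matrix.diagonal (fun i => ((hA.eigenvalues i ^ r : ℝ) : ℂ)) * W) * Vᴴ) := by
          rw [Matrix.mul_assoc, ← hWV]; simp only [Matrix.mul_assoc]
      _ = U * ((W * Matrix.diagonal (fun i => ((d i ^ r : ℝ) : ℂ))) * Vᴴ) := by
          rw [hWr']
      _ = (U * W) * (Matrix.diagonal (fun i => ((d i ^ r : ℝ) : ℂ)) * Vᴴ) := by
          simp only [Matrix.mul_assoc]
      _ = V * Matrix.diagonal (fun i => ((d i ^ r : ℝ) : ℂ)) * Vᴴ := by
          rw [hUW, Matrix.mul_assoc]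
  unfold Matrix.hpow
  rw [dif_pos hA, ← key]

private lemma trace_hpow (A : Matrix n n ℂ) (hA : A.IsHermitian) (r : ℝ) :
    (A.hpow r).trace = ∑ i, ((hA.eigenvalues i ^ r : ℝ) : ℂ) := by
  have hUU : (hA.eigenvectorUnitary : Matrix n n ℂ)ᴴ * (hA.eigenvectorUnitary : Matrix n n ℂ)
      = 1 := by
    rw [← Matrix.star_eq_conjTranspose]
    exact Matrix.mem_unitaryGroup_iff'.mp hA.eigenvectorUnitary.2
  unfold Matrix.hpow
  rw [dif_pos hA, Matrix.trace_mul_cycle, hUU, Matrix.one_mul, Matrix.trace_diagonal]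

private lemma trace_eq_sum_eig (A : Matrix n n ℂ) (hA : A.IsHermitian) :
    A.trace = ∑ i, ((hA.eigenvalues i : ℝ) : ℂ) := by
  have hUU : star (hA.eigenvectorUnitary : Matrix n n ℂ) * (hA.eigenvectorUnitary : Matrix n n ℂ)
      = 1 := Matrix.mem_unitaryGroup_iff'.mp hA.eigenvectorUnitary.2
  conv_lhs => rw [hA.spectral_theorem, Unitary.conjStarAlgAut_apply]
  rw [Matrix.trace_mul_cycle, hUU, Matrix.one_mul, Matrix.trace_diagonal]
  rfl

private lemma hpow_of_sq {A : Matrix n n ℂ} (hA : A.IsHermitian) {lam : ℝ} (hlam : 0 < lam)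
    (hsq : A * A = ((lam : ℝ) : ℂ) • A) {r : ℝ} (hr : 0 < r) :
    A.hpow r = ((lam ^ (r - 1) : ℝ) : ℂ) • A := by
  set U : Matrix n n ℂ := (hA.eigenvectorUnitary : Matrix n n ℂ) with hUdef
  have hUU : Uᴴ * U = 1 := by
    rw [← Matrix.star_eq_conjTranspose]
    exact Matrix.mem_unitaryGroup_iff'.mp hA.eigenvectorUnitary.2
  have hUU' : U * Uᴴ = 1 := by
    rw [← Matrix.star_eq_conjTranspose]
    exact Matrix.mem_unitaryGroup_iff.mp hA.eigenvectorUnitary.2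
  have hspec : A = U * Matrix.diagonal (fun i => ((hA.eigenvalues i : ℝ) : ℂ)) * Uᴴ := by
    simpa [Function.comp_def, Matrix.star_eq_conjTranspose] using hA.spectral_theorem
  have hUAU : Uᴴ * A * U = Matrix.diagonal (fun i => ((hA.eigenvalues i : ℝ) : ℂ)) := by
    conv_lhs => rw [hspec]
    calc Uᴴ * (U * Matrix.diagonal (fun i => ((hA.eigenvalues i : ℝ) : ℂ)) * Uᴴ) * U
        = (Uᴴ * U) * Matrix.diagonal (fun i => ((hA.eigenvalues i : ℝ) : ℂ)) * (Uᴴ * U) := by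
          simp only [Matrix.mul_assoc]
      _ = _ := by rw [hUU]; simp
  have heig : ∀ i, hA.eigenvalues i = 0 ∨ hA.eigenvalues i = lam := by
    intro i
    have h1 : Uᴴ * (A * A) * U
        = Matrix.diagonal (fun i => ((hA.eigenvalues i : ℝ) : ℂ))
          * Matrix.diagonal (fun i => ((hA.eigenvalues i : ℝ) : ℂ)) := by
      rw [← hUAU]
      calc Uᴴ * (A * A) * U = (Uᴴ * A) * (U * Uᴴ) * (A * U) := by
            rw [hUU']; simp only [Matrix.mul_assoc, Matrix.one_mul]
        _ = (Uᴴ * A * U) * (Uᴴ * A * U) := by simp only [Matrix.mul_assoc]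
    rw [hsq] at h1
    have h2 : Uᴴ * (((lam : ℝ) : ℂ) • A) * U
        = ((lam : ℝ) : ℂ) • Matrix.diagonal (fun i => ((hA.eigenvalues i : ℝ) : ℂ)) := by
      rw [Matrix.mul_smul, Matrix.smul_mul, hUAU]
    rw [h2] at h1
    have h3 := congrFun (congrFun h1 i) i
    rw [Matrix.diagonal_mul_diagonal] at h3
    simp only [Matrix.diagonal_apply_eq, Matrix.smul_apply, smul_eq_mul] at h3
    have h4 : lam * hA.eigenvalues i = hA.eigenvalues i * hA.eigenvalues i := by
      exact_mod_cast h3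
    have h5 : (hA.eigenvalues i - lam) * hA.eigenvalues i = 0 := by linear_combination -h4
    rcases mul_eq_zero.mp h5 with h6 | h6
    · right; linarith
    · left; exact h6
  have herp : ∀ i, ((hA.eigenvalues i ^ r : ℝ) : ℂ)
      = ((lam ^ (r - 1) : ℝ) : ℂ) * ((hA.eigenvalues i : ℝ) : ℂ) := by
    intro i
    rcases heig i with h | h
    · rw [h, Real.zero_rpow (ne_of_gt hr)]; simp
    · rw [h, ← Complex.ofReal_mul]
      congr 1
      rw [show r = (r - 1) + 1 by ring]
      rw [Real.rpow_add hlam, Real.rpow_one]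
      ring_nf
  have hdg : Matrix.diagonal (fun i => ((hA.eigenvalues i ^ r : ℝ) : ℂ))
      = ((lam ^ (r - 1) : ℝ) : ℂ) • Matrix.diagonal (fun i => ((hA.eigenvalues i : ℝ) : ℂ)) := by
    ext i j
    rcases eq_or_ne i j with h | h
    · subst h; simp [herp i]
    · simp [Matrix.diagonal_apply_ne _ h, h]
  unfold Matrix.hpow
  rw [dif_pos hA, hdg, Matrix.mul_smul, Matrix.smul_mul, ← hspec]

end AuxFC


section AuxPSD

variable {n : Type*} [Fintype n] [DecidableEq n]

private lemma psd_decomp (V : Matrix n n ℂ) (d : n → ℝ) (hd : ∀ i, 0 ≤ d i) :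
    (V * Matrix.diagonal (fun i => ((d i : ℝ) : ℂ)) * Vᴴ).PosSemidef := by
  have hdiag : (Matrix.diagonal (fun i => ((d i : ℝ) : ℂ))).PosSemidef := by
    rw [Matrix.posSemidef_diagonal_iff]
    intro i
    exact Complex.zero_le_real.mpr (hd i)
  exact hdiag.mul_mul_conjTranspose_same V

private lemma psd_trace_re_nonneg {M : Matrix n n ℂ} (hM : M.PosSemidef) : 0 ≤ M.trace.re := by
  have h : ∀ i, 0 ≤ (M i i).re := by
    intro i
    have h0 := hM.re_dotProduct_nonneg (Pi.single i 1)
    simpa [dotProduct, Matrix.mulVec, Pi.single_apply, Finset.sum_ite_eq,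
      dotProduct_single, single_dotProduct] using h0
  have : M.trace.re = ∑ i, (M i i).re := by
    simp [Matrix.trace, Matrix.diag, Complex.re_sum]
  rw [this]
  exact Finset.sum_nonneg fun i _ => h i

private lemma trace_mul_psd_re_nonneg {B ρ : Matrix n n ℂ} (hB : B.PosSemidef)
    (hρ : ρ.PosSemidef) : 0 ≤ (B * ρ).trace.re := by
  open scoped MatrixOrder in
  have hB0 : 0 ≤ B := hB.nonneg
  open scoped MatrixOrder in
  set S := CFC.sqrt B with hS
  open scoped MatrixOrder in
  have hmul : S * S = B := CFC.sqrt_mul_sqrt_self B hB0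
  have h1 : (S * ρ * S).trace = (B * ρ).trace := by
    rw [Matrix.trace_mul_cycle S ρ S, hmul]
  have h2 : (S * ρ * S).PosSemidef := by
    have := hρ.mul_mul_conjTranspose_same S
    open scoped MatrixOrder in
    rwa [(CFC.sqrt_nonneg B).posSemidef.isHermitian.eq] at this
  rw [← h1]
  exact psd_trace_re_nonneg h2

end AuxPSD

section AuxKron

variable {a e : Type*} [Fintype a] [DecidableEq a] [Fintype e] [DecidableEq e]

private lemma kron_conjT (A : Matrix a a ℂ) (B : Matrix e e ℂ) :
    (A ⊗ₖ B)ᴴ = Aᴴ ⊗ₖ Bᴴ := by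
  ext ⟨i, j⟩ ⟨k, l⟩
  simp only [Matrix.conjTranspose_apply, Matrix.kroneckerMap_apply, star_mul', mul_comm]

private lemma one_kron_mem (V : Matrix e e ℂ) (hV : V ∈ Matrix.unitaryGroup e ℂ) :
    (1 : Matrix a a ℂ) ⊗ₖ V ∈ Matrix.unitaryGroup (a × e) ℂ := by
  have hVV : V * Vᴴ = 1 := by
    rw [← Matrix.star_eq_conjTranspose]; exact Matrix.mem_unitaryGroup_iff.mp hV
  rw [Matrix.mem_unitaryGroup_iff, Matrix.star_eq_conjTranspose, kron_conjT,
    Matrix.conjTranspose_one, ← Matrix.mul_kronecker_mul, Matrix.one_mul, hVV,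
    Matrix.one_kronecker_one]

private lemma one_kron_diag (d : e → ℂ) :
    (1 : Matrix a a ℂ) ⊗ₖ Matrix.diagonal d = Matrix.diagonal (fun x : a × e => d x.2) := by
  rw [← Matrix.diagonal_one, Matrix.diagonal_kronecker_diagonal]
  congr 1
  funext x
  simp

end AuxKron

section AuxWeyl

private lemma Xmat_unitary (p : ℕ) [NeZero p] : Xmat p ∈ Matrix.unitaryGroup (ZMod p) ℂ := by
  rw [Matrix.mem_unitaryGroup_iff]
  ext j k
  rw [Matrix.mul_apply]
  have hterm : ∀ l : ZMod p, Xmat p j l * (star (Xmat p)) l k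
      = if l = j - 1 then (if j = k then (1 : ℂ) else 0) else 0 := by
    intro l
    rw [show (star (Xmat p)) l k = star (Xmat p k l) from rfl]
    simp only [Xmat, Matrix.of_apply]
    rw [apply_ite (star : ℂ → ℂ), star_one, star_zero]
    rcases eq_or_ne j (l + 1) with h1 | h1
    · have hl : l = j - 1 := by rw [h1]; ring
      rw [if_pos h1, if_pos hl, one_mul]
      rcases eq_or_ne k (l + 1) with h2 | h2
      · have hjk : j = k := by rw [h1, h2]
        rw [if_pos h2, if_pos hjk]
      · have hjk : ¬ j = k := fun hh => h2 (hh ▸ h1)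
        rw [if_neg h2, if_neg hjk]
    · have hl : ¬ l = j - 1 := fun hh => h1 (by rw [hh]; ring)
      rw [if_neg h1, if_neg hl, zero_mul]
  rw [Finset.sum_congr rfl (fun l _ => hterm l), Finset.sum_ite_eq' Finset.univ (j - 1)]
  simp [Matrix.one_apply]

private lemma omeg_mul_star (p : ℕ) [NeZero p] : omeg p * star (omeg p) = 1 := by
  unfold omeg
  have hconj : star (Complex.exp (2 * Real.pi * Complex.I / p))
      = Complex.exp (-(2 * Real.pi * Complex.I / p)) := by
    rw [Complex.star_def, ← Complex.exp_conj]
    congr 1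
    have h2 : (starRingEnd ℂ) (2 : ℂ) = 2 := by
      simpa using Complex.conj_ofReal 2
    rw [map_div₀, _root_.map_mul, _root_.map_mul, h2, Complex.conj_ofReal, Complex.conj_I,
      Complex.conj_natCast]
    ring
  rw [hconj, ← Complex.exp_add]
  simp

private lemma Zmat_unitary (p : ℕ) [NeZero p] : Zmat p ∈ Matrix.unitaryGroup (ZMod p) ℂ := by
  rw [Matrix.mem_unitaryGroup_iff, Matrix.star_eq_conjTranspose]
  unfold Zmat
  rw [Matrix.diagonal_conjTranspose, Matrix.diagonal_mul_diagonal]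
  have hd : ∀ i : ZMod p, omeg p ^ i.val * star (fun j : ZMod p => omeg p ^ j.val) i = 1 := by
    intro i; rw [Pi.star_apply, star_pow, ← mul_pow, omeg_mul_star, one_pow]
  ext i j
  rcases eq_or_ne i j with h | h
  · subst h
    rw [Matrix.diagonal_apply_eq, Matrix.one_apply_eq]
    exact hd i
  · rw [Matrix.diagonal_apply_ne _ h, Matrix.one_apply_ne h]

private lemma weyl_unitary (p : ℕ) [NeZero p] (x z : ZMod p) :
    WeylOp p x z ∈ Matrix.unitaryGroup (ZMod p) ℂ := by
  unfold WeylOp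
  exact mul_mem (pow_mem (Xmat_unitary p) _) (pow_mem (Zmat_unitary p) _)

private lemma weyl_orth (p : ℕ) [NeZero p] (x z b b' : ZMod p) :
    ∑ a : ZMod p, star (WeylOp p x z a b) * WeylOp p x z a b'
      = if b = b' then (1 : ℂ) else 0 := by
  have h := Matrix.mem_unitaryGroup_iff'.mp (weyl_unitary p x z)
  have h2 : (star (WeylOp p x z) * WeylOp p x z) b b'
      = (1 : Matrix (ZMod p) (ZMod p) ℂ) b b' := by rw [h]
  rw [Matrix.mul_apply] at h2
  simpa [Matrix.star_eq_conjTranspose, Matrix.conjTranspose_apply, Matrix.one_apply] using h2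

end AuxWeyl


section AuxState

private def fvec (p : ℕ) [NeZero p] (P : ZMod p × ZMod p → ℝ) (b : ZMod p) :
    ZMod p × (ZMod p × ZMod p) → ℂ :=
  fun x => PsiVec p P (x.1, b, x.2)

private lemma kron_mulVec_bell (p : ℕ) [NeZero p] (W : Matrix (ZMod p) (ZMod p) ℂ)
    (a b : ZMod p) :
    ((W ⊗ₖ (1 : Matrix (ZMod p) (ZMod p) ℂ)).mulVec (BellVec p)) (a, b)
      = W a b * (((Real.sqrt p : ℝ) : ℂ))⁻¹ := by
  classical
  have expand : ((W ⊗ₖ (1 : Matrix (ZMod p) (ZMod p) ℂ)).mulVec (BellVec p)) (a, b)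
      = ∑ j : ZMod p, ∑ k : ZMod p,
          (W a j * (1 : Matrix (ZMod p) (ZMod p) ℂ) b k) * BellVec p (j, k) := by
    rw [Matrix.mulVec, dotProduct, Fintype.sum_prod_type]
    rfl
  rw [expand]
  have hin : ∀ j : ZMod p, (∑ k : ZMod p,
      (W a j * (1 : Matrix (ZMod p) (ZMod p) ℂ) b k) * BellVec p (j, k))
        = W a j * (1 : Matrix (ZMod p) (ZMod p) ℂ) b j * (((Real.sqrt p : ℝ) : ℂ))⁻¹ := by
    intro j
    have : ∀ k : ZMod p, (W a j * (1 : Matrix (ZMod p) (ZMod p) ℂ) b k) * BellVec p (j, k)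
        = if j = k then W a j * (1 : Matrix (ZMod p) (ZMod p) ℂ) b k
            * (((Real.sqrt p : ℝ) : ℂ))⁻¹ else 0 := by
      intro k
      unfold BellVec
      rcases eq_or_ne j k with h | h
      · rw [if_pos h, if_pos h]
      · rw [if_neg h, if_neg h, mul_zero]
    rw [Finset.sum_congr rfl (fun k _ => this k), Finset.sum_ite_eq Finset.univ j]
    simp
  rw [Finset.sum_congr rfl (fun j _ => hin j)]
  have : ∀ j : ZMod p, W a j * (1 : Matrix (ZMod p) (ZMod p) ℂ) b j
      * (((Real.sqrt p : ℝ) : ℂ))⁻¹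
        = if b = j then W a j * (((Real.sqrt p : ℝ) : ℂ))⁻¹ else 0 := by
    intro j
    rw [Matrix.one_apply]
    rcases eq_or_ne b j with h | h
    · rw [if_pos h, if_pos h, mul_one]
    · rw [if_neg h, if_neg h, mul_zero, zero_mul]
  rw [Finset.sum_congr rfl (fun j _ => this j), Finset.sum_ite_eq Finset.univ b]
  simp

private lemma fvec_apply (p : ℕ) [NeZero p] (P : ZMod p × ZMod p → ℝ) (b : ZMod p)
    (x : ZMod p × (ZMod p × ZMod p)) :
    fvec p P b x = ((Real.sqrt (P x.2) : ℝ) : ℂ) * (((Real.sqrt p : ℝ) : ℂ))⁻¹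
      * WeylOp p x.2.1 x.2.2 x.1 b := by
  unfold fvec PsiVec
  rw [kron_mulVec_bell]
  ring

private lemma inner_fvec (p : ℕ) [NeZero p] (P : ZMod p × ZMod p → ℝ) (hP0 : ∀ e, 0 ≤ P e)
    (g : ZMod p × ZMod p → ℝ) (b b' : ZMod p) :
    ∑ x : ZMod p × (ZMod p × ZMod p),
        star ((g x.2 : ℂ) * fvec p P b x) * ((g x.2 : ℂ) * fvec p P b' x)
      = if b = b' then ((((p : ℝ))⁻¹ * ∑ e, g e ^ 2 * P e : ℝ) : ℂ) else 0 := by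
  classical
  have hterm : ∀ x : ZMod p × (ZMod p × ZMod p),
      star ((g x.2 : ℂ) * fvec p P b x) * ((g x.2 : ℂ) * fvec p P b' x)
        = ((g x.2 ^ 2 * P x.2 * (p : ℝ)⁻¹ : ℝ) : ℂ)
            * (star (WeylOp p x.2.1 x.2.2 x.1 b) * WeylOp p x.2.1 x.2.2 x.1 b') := by
    intro x
    rw [fvec_apply, fvec_apply]
    have h1 : ((Real.sqrt (P x.2) : ℝ) : ℂ) * ((Real.sqrt (P x.2) : ℝ) : ℂ)
        = ((P x.2 : ℝ) : ℂ) := by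
      rw [← Complex.ofReal_mul, Real.mul_self_sqrt (hP0 x.2)]
    have h2 : (((Real.sqrt p : ℝ) : ℂ))⁻¹ * (((Real.sqrt p : ℝ) : ℂ))⁻¹
        = ((p : ℂ))⁻¹ := by
      rw [← mul_inv, ← Complex.ofReal_mul, Real.mul_self_sqrt (Nat.cast_nonneg p),
        Complex.ofReal_natCast]
    simp only [star_mul', Complex.star_def, Complex.conj_ofReal, map_inv₀]
    push_cast
    linear_combination ((starRingEnd ℂ) (WeylOp p x.2.1 x.2.2 x.1 b)
        * WeylOp p x.2.1 x.2.2 x.1 b' * ((g x.2 : ℂ))^2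
        * ((((Real.sqrt p : ℝ) : ℂ))⁻¹ * (((Real.sqrt p : ℝ) : ℂ))⁻¹)) * h1
      + ((starRingEnd ℂ) (WeylOp p x.2.1 x.2.2 x.1 b) * WeylOp p x.2.1 x.2.2 x.1 b'
        * ((g x.2 : ℂ))^2 * ((P x.2 : ℝ) : ℂ)) * h2
  rw [Finset.sum_congr rfl (fun x _ => hterm x), Fintype.sum_prod_type, Finset.sum_comm]
  have hin : ∀ e : ZMod p × ZMod p,
      (∑ a : ZMod p, ((g e ^ 2 * P e * (p : ℝ)⁻¹ : ℝ) : ℂ)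
        * (star (WeylOp p e.1 e.2 a b) * WeylOp p e.1 e.2 a b'))
      = ((g e ^ 2 * P e * (p : ℝ)⁻¹ : ℝ) : ℂ) * (if b = b' then 1 else 0) := by
    intro e
    rw [← Finset.mul_sum, weyl_orth]
  rw [Finset.sum_congr rfl (fun e _ => hin e)]
  rcases eq_or_ne b b' with h | h
  · rw [if_pos h]
    simp only [if_pos h, mul_one]
    rw [← Complex.ofReal_sum]
    congr 1
    rw [Finset.mul_sum]
    exact Finset.sum_congr rfl fun e _ => by ring
  · rw [if_neg h]
    simp [if_neg h]

private def rhoAE (p : ℕ) [NeZero p] (P : ZMod p × ZMod p → ℝ) :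
    Matrix (ZMod p × (ZMod p × ZMod p)) (ZMod p × (ZMod p × ZMod p)) ℂ :=
  Matrix.of fun (ae ae' : ZMod p × (ZMod p × ZMod p)) =>
    ∑ b : ZMod p,
      Matrix.vecMulVec (PsiVec p P) (star (PsiVec p P)) (ae.1, b, ae.2) (ae'.1, b, ae'.2)

private lemma rhoAE_apply (p : ℕ) [NeZero p] (P : ZMod p × ZMod p → ℝ)
    (x y : ZMod p × (ZMod p × ZMod p)) :
    rhoAE p P x y = ∑ b : ZMod p, fvec p P b x * star (fvec p P b y) := rfl

private def uvec (p : ℕ) [NeZero p] (P : ZMod p × ZMod p → ℝ) (g : ZMod p × ZMod p → ℝ)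
    (b : ZMod p) : ZMod p × (ZMod p × ZMod p) → ℂ :=
  fun x => (g x.2 : ℂ) * fvec p P b x

private def Mg (p : ℕ) [NeZero p] (P : ZMod p × ZMod p → ℝ) (g : ZMod p × ZMod p → ℝ) :
    Matrix (ZMod p × (ZMod p × ZMod p)) (ZMod p × (ZMod p × ZMod p)) ℂ :=
  ∑ b : ZMod p, Matrix.vecMulVec (uvec p P g b) (star (uvec p P g b))

private lemma Mg_apply (p : ℕ) [NeZero p] (P : ZMod p × ZMod p → ℝ) (g : ZMod p × ZMod p → ℝ)
    (x y : ZMod p × (ZMod p × ZMod p)) :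
    Mg p P g x y = ∑ b : ZMod p, uvec p P g b x * star (uvec p P g b y) := by
  unfold Mg
  rw [Matrix.sum_apply]
  rfl

private lemma Mg_isHermitian (p : ℕ) [NeZero p] (P : ZMod p × ZMod p → ℝ)
    (g : ZMod p × ZMod p → ℝ) : (Mg p P g).IsHermitian := by
  unfold Matrix.IsHermitian
  ext x y
  rw [Matrix.conjTranspose_apply, Mg_apply, Mg_apply, star_sum]
  exact Finset.sum_congr rfl fun b _ => by
    simp only [star_mul', star_star]
    ring

private lemma Mg_sq (p : ℕ) [NeZero p] (P : ZMod p × ZMod p → ℝ) (hP0 : ∀ e, 0 ≤ P e)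
    (g : ZMod p × ZMod p → ℝ) :
    Mg p P g * Mg p P g
      = ((((p : ℝ))⁻¹ * ∑ e, g e ^ 2 * P e : ℝ) : ℂ) • Mg p P g := by
  classical
  set c : ℝ := ((p : ℝ))⁻¹ * ∑ e, g e ^ 2 * P e with hc
  ext x y
  rw [Matrix.mul_apply, Matrix.smul_apply, Mg_apply, smul_eq_mul]
  have expand : ∀ z, Mg p P g x z * Mg p P g z y
      = ∑ b : ZMod p, ∑ b' : ZMod p,
          (uvec p P g b x * star (uvec p P g b z))
            * (uvec p P g b' z * star (uvec p P g b' y)) := by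
    intro z
    rw [Mg_apply, Mg_apply, Finset.sum_mul_sum]
  rw [Finset.sum_congr rfl (fun z _ => expand z)]
  rw [Finset.sum_comm]
  have hswap : ∀ b : ZMod p, (∑ z, ∑ b' : ZMod p,
      (uvec p P g b x * star (uvec p P g b z)) * (uvec p P g b' z * star (uvec p P g b' y)))
      = ∑ b' : ZMod p, ∑ z,
        (uvec p P g b x * star (uvec p P g b z)) * (uvec p P g b' z * star (uvec p P g b' y)) := by
    intro b
    exact Finset.sum_comm
  rw [Finset.sum_congr rfl (fun b _ => hswap b)]
  have hz : ∀ b b' : ZMod p, (∑ z,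
      (uvec p P g b x * star (uvec p P g b z)) * (uvec p P g b' z * star (uvec p P g b' y)))
      = (uvec p P g b x * star (uvec p P g b' y))
          * (if b = b' then (c : ℂ) else 0) := by
    intro b b'
    rw [← inner_fvec p P hP0 g b b']
    rw [Finset.mul_sum]
    exact Finset.sum_congr rfl fun z _ => by
      unfold uvec
      ring
  rw [Finset.sum_congr rfl (fun b _ => Finset.sum_congr rfl (fun b' _ => hz b b'))]
  have hcol : ∀ b : ZMod p, (∑ b' : ZMod p, (uvec p P g b x * star (uvec p P g b' y))
      * (if b = b' then (c : ℂ) else 0))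
      = uvec p P g b x * star (uvec p P g b y) * (c : ℂ) := by
    intro b
    rw [Finset.sum_eq_single b]
    · rw [if_pos rfl]
    · intro b' _ hb'
      rw [if_neg (fun hh => hb' hh.symm), mul_zero]
    · intro h
      exact absurd (Finset.mem_univ b) h
  rw [Finset.sum_congr rfl (fun b _ => hcol b), ← Finset.sum_mul, mul_comm]

private lemma Mg_trace (p : ℕ) [NeZero p] (P : ZMod p × ZMod p → ℝ) (hP0 : ∀ e, 0 ≤ P e)
    (g : ZMod p × ZMod p → ℝ) :
    (Mg p P g).trace = ((∑ e, g e ^ 2 * P e : ℝ) : ℂ) := by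
  classical
  have h1 : (Mg p P g).trace
      = ∑ b : ZMod p, ∑ x, uvec p P g b x * star (uvec p P g b x) := by
    rw [Matrix.trace]
    rw [show (∑ i, (Mg p P g).diag i) = ∑ i, Mg p P g i i from rfl]
    rw [Finset.sum_congr rfl (fun x _ => Mg_apply p P g x x)]
    exact Finset.sum_comm
  rw [h1]
  have h2 : ∀ b : ZMod p, (∑ x, uvec p P g b x * star (uvec p P g b x))
      = ((((p : ℝ))⁻¹ * ∑ e, g e ^ 2 * P e : ℝ) : ℂ) := by
    intro b
    have := inner_fvec p P hP0 g b b
    rw [if_pos rfl] at this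
    rw [← this]
    exact Finset.sum_congr rfl fun x _ => by unfold uvec; ring
  rw [Finset.sum_congr rfl (fun b _ => h2 b), Finset.sum_const, Finset.card_univ, ZMod.card]
  rw [nsmul_eq_mul]
  rw [← Complex.ofReal_natCast, ← Complex.ofReal_mul]
  congr 1
  have hp0 : (p : ℝ) ≠ 0 := Nat.cast_ne_zero.mpr (NeZero.ne p)
  field_simp

private lemma rhoAE_psd (p : ℕ) [NeZero p] (P : ZMod p × ZMod p → ℝ) :
    (rhoAE p P).PosSemidef := by
  have heq : rhoAE p P
      = ∑ b : ZMod p, Matrix.vecMulVec (fvec p P b) (star (fvec p P b)) := by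
    ext x y
    rw [rhoAE_apply, Matrix.sum_apply]
    rfl
  rw [heq]
  apply Finset.sum_induction (fun b => Matrix.vecMulVec (fvec p P b) (star (fvec p P b)))
    Matrix.PosSemidef (fun A B hA hB => hA.add hB) Matrix.PosSemidef.zero
  intro b _
  rw [Matrix.posSemidef_iff_dotProduct_mulVec]
  constructor
  · unfold Matrix.IsHermitian
    ext x y
    simp only [Matrix.conjTranspose_apply, Matrix.vecMulVec_apply, Pi.star_apply, star_mul',
      star_star]
    ring
  · intro v
    have hmv : (Matrix.vecMulVec (fvec p P b) (star (fvec p P b))) *ᵥ v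
        = (star (fvec p P b) ⬝ᵥ v) • fvec p P b := by
      ext i
      simp only [Matrix.mulVec, dotProduct, Matrix.vecMulVec_apply, Pi.smul_apply,
        Pi.star_apply, smul_eq_mul, Finset.sum_mul]
      exact Finset.sum_congr rfl fun j _ => by ring
    rw [hmv]
    set z : ℂ := star (fvec p P b) ⬝ᵥ v with hz
    have hdot : star v ⬝ᵥ (z • fvec p P b) = z * (star v ⬝ᵥ fvec p P b) := by
      rw [dotProduct_smul]
      simp [smul_eq_mul]
    rw [hdot]
    have hstar : star v ⬝ᵥ fvec p P b = star z := by
      rw [hz]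
      simp only [dotProduct, Pi.star_apply, star_sum, star_mul', star_star]
      exact Finset.sum_congr rfl fun j _ => by ring
    rw [hstar, Complex.star_def, Complex.mul_conj]
    exact Complex.zero_le_real.mpr (Complex.normSq_nonneg z)

end AuxState


section AuxMain

private lemma rhoAE_trace (p : ℕ) [NeZero p] (P : ZMod p × ZMod p → ℝ) (hP0 : ∀ e, 0 ≤ P e)
    (hP1 : ∑ e, P e = 1) : (rhoAE p P).trace = 1 := by
  have heq : rhoAE p P = Mg p P (fun _ => 1) := by
    ext x y
    rw [rhoAE_apply, Mg_apply]
    refine Finset.sum_congr rfl fun b _ => ?_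
    unfold uvec
    push_cast
    ring
  rw [heq, Mg_trace p P hP0]
  have h1 : ∑ e : ZMod p × ZMod p, (fun _ : ZMod p × ZMod p => (1:ℝ)) e ^ 2 * P e
      = ∑ e : ZMod p × ZMod p, P e := Finset.sum_congr rfl fun e _ => by norm_num
  rw [h1, hP1]
  norm_num

private lemma diag_sandwich (p : ℕ) [NeZero p] (P : ZMod p × ZMod p → ℝ)
    (g : ZMod p × ZMod p → ℝ) :
    Matrix.diagonal (fun x : ZMod p × (ZMod p × ZMod p) => ((g x.2 : ℝ) : ℂ)) * rhoAE p P *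
        Matrix.diagonal (fun x : ZMod p × (ZMod p × ZMod p) => ((g x.2 : ℝ) : ℂ))
      = Mg p P g := by
  ext x y
  rw [Matrix.mul_diagonal, Matrix.diagonal_mul, rhoAE_apply, Mg_apply, Finset.mul_sum,
    Finset.sum_mul]
  refine Finset.sum_congr rfl fun b _ => ?_
  unfold uvec
  simp only [star_mul', Complex.star_def, Complex.conj_ofReal]
  ring

private lemma sandwichTr_diag (p : ℕ) [NeZero p] (P : ZMod p × ZMod p → ℝ)
    (hP0 : ∀ e, 0 ≤ P e) (t : ℝ) (ht : 0 < t)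
    (q : ZMod p × ZMod p → ℝ) (hq : ∀ e, 0 < q e)
    (hNpos : 0 < (p : ℝ)⁻¹ * ∑ e, (q e ^ (-(t / (2 * (1 + t))))) ^ 2 * P e) :
    sandwichTr t (rhoAE p P)
        ((1 : Matrix (ZMod p) (ZMod p) ℂ) ⊗ₖ Matrix.diagonal (fun e => (q e : ℂ)))
      = ((p : ℝ)⁻¹ * ∑ e, (q e ^ (-(t / (2 * (1 + t)))) : ℝ) ^ 2 * P e) ^ t
        * ((p : ℝ) * ((p : ℝ)⁻¹ * ∑ e, (q e ^ (-(t / (2 * (1 + t)))) : ℝ) ^ 2 * P e)) := by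
  classical
  have hpne : (p : ℝ) ≠ 0 := Nat.cast_ne_zero.mpr (NeZero.ne p)
  have hA_dec : (1 : Matrix (ZMod p) (ZMod p) ℂ) ⊗ₖ Matrix.diagonal (fun e => (q e : ℂ))
      = 1 * Matrix.diagonal
          (fun x : ZMod p × (ZMod p × ZMod p) => ((q x.2 : ℝ) : ℂ)) * (1 : Matrix _ _ ℂ)ᴴ := by
    rw [one_kron_diag (fun e : ZMod p × ZMod p => (q e : ℂ))]
    simp
  have hone : (1 : Matrix (ZMod p × (ZMod p × ZMod p)) (ZMod p × (ZMod p × ZMod p)) ℂ)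
      ∈ Matrix.unitaryGroup (ZMod p × (ZMod p × ZMod p)) ℂ := by
    rw [Matrix.mem_unitaryGroup_iff]
    simp
  have hX : ((1 : Matrix (ZMod p) (ZMod p) ℂ) ⊗ₖ Matrix.diagonal (fun e => (q e : ℂ))).hpow
        (-(t / (2 * (1 + t))))
      = Matrix.diagonal (fun x : ZMod p × (ZMod p × ZMod p) =>
          ((q x.2 ^ (-(t / (2 * (1 + t)))) : ℝ) : ℂ)) := by
    rw [hpow_of_decomp 1 hone (fun x : ZMod p × (ZMod p × ZMod p) => q x.2) hA_dec
      (-(t / (2 * (1 + t))))]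
    simp
  have hMid : ((1 : Matrix (ZMod p) (ZMod p) ℂ) ⊗ₖ Matrix.diagonal (fun e => (q e : ℂ))).hpow
        (-(t / (2 * (1 + t))))
        * rhoAE p P
        * ((1 : Matrix (ZMod p) (ZMod p) ℂ) ⊗ₖ Matrix.diagonal (fun e => (q e : ℂ))).hpow
        (-(t / (2 * (1 + t))))
      = Mg p P (fun e => q e ^ (-(t / (2 * (1 + t))))) := by
    rw [hX]
    exact diag_sandwich p P (fun e => q e ^ (-(t / (2 * (1 + t)))))
  have hsq : Mg p P (fun e => q e ^ (-(t / (2 * (1 + t)))))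
        * Mg p P (fun e => q e ^ (-(t / (2 * (1 + t)))))
      = (((p : ℝ)⁻¹ * ∑ e, (q e ^ (-(t / (2 * (1 + t))))) ^ 2 * P e : ℝ) : ℂ)
          • Mg p P (fun e => q e ^ (-(t / (2 * (1 + t))))) :=
    Mg_sq p P hP0 _
  have hher := Mg_isHermitian p P (fun e => q e ^ (-(t / (2 * (1 + t)))))
  have h1t : (0:ℝ) < 1 + t := by linarith
  have hhp := hpow_of_sq hher hNpos hsq h1t
  have hMtr : (Mg p P (fun e => q e ^ (-(t / (2 * (1 + t)))))).trace
      = ((∑ e, (q e ^ (-(t / (2 * (1 + t))))) ^ 2 * P e : ℝ) : ℂ) :=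
    Mg_trace p P hP0 _
  unfold sandwichTr
  rw [hMid, hhp, Matrix.trace_smul, hMtr, smul_eq_mul, ← Complex.ofReal_mul,
    Complex.ofReal_re, show (1 : ℝ) + t - 1 = t by ring]
  have hNc : (∑ e, (q e ^ (-(t / (2 * (1 + t))))) ^ 2 * P e)
      = (p : ℝ) * ((p : ℝ)⁻¹ * ∑ e, (q e ^ (-(t / (2 * (1 + t))))) ^ 2 * P e) := by
    field_simp
  rw [← hNc]

end AuxMain


section AuxLower

private lemma sandwichTr_ge (p : ℕ) [NeZero p] (P : ZMod p × ZMod p → ℝ)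
    (hP0 : ∀ e, 0 ≤ P e) (hP1 : ∑ e, P e = 1) (t : ℝ) (ht : 0 < t)
    (σ : Matrix (ZMod p × ZMod p) (ZMod p × ZMod p) ℂ) (hσ : σ.PosDef) (htr : σ.trace = 1) :
    ((Fintype.card (ZMod p × (ZMod p × ZMod p)) : ℝ))⁻¹ ^ (1 + t)
      ≤ sandwichTr t (rhoAE p P) ((1 : Matrix (ZMod p) (ZMod p) ℂ) ⊗ₖ σ) := by
  classical
  set r : ℝ := -(t / (2 * (1 + t))) with hrdef
  have hrle : r ≤ 0 := by
    rw [hrdef]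
    have : 0 ≤ t / (2 * (1 + t)) := by positivity
    linarith
  have hH : σ.IsHermitian := hσ.1
  set V : Matrix (ZMod p × ZMod p) (ZMod p × ZMod p) ℂ :=
    (hH.eigenvectorUnitary : Matrix (ZMod p × ZMod p) (ZMod p × ZMod p) ℂ) with hVdef
  set ev : ZMod p × ZMod p → ℝ := hH.eigenvalues with hevdef
  have hVmem : V ∈ Matrix.unitaryGroup (ZMod p × ZMod p) ℂ := hH.eigenvectorUnitary.2
  have hUmem := one_kron_mem (a := ZMod p) V hVmem
  have hdecσ : σ = V * Matrix.diagonal (fun i => ((ev i : ℝ) : ℂ)) * Vᴴ := by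
    simpa [Function.comp_def, Matrix.star_eq_conjTranspose] using hH.spectral_theorem
  have hdecA : (1 : Matrix (ZMod p) (ZMod p) ℂ) ⊗ₖ σ
      = ((1 : Matrix (ZMod p) (ZMod p) ℂ) ⊗ₖ V)
        * Matrix.diagonal (fun x : ZMod p × (ZMod p × ZMod p) => ((ev x.2 : ℝ) : ℂ))
        * ((1 : Matrix (ZMod p) (ZMod p) ℂ) ⊗ₖ V)ᴴ := by
    rw [kron_conjT, Matrix.conjTranspose_one,
      ← one_kron_diag (fun e : ZMod p × ZMod p => ((ev e : ℝ) : ℂ)),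
      ← Matrix.mul_kronecker_mul, ← Matrix.mul_kronecker_mul, Matrix.one_mul, Matrix.one_mul,
      ← hdecσ]
  -- eigenvalues of σ are in (0, 1]
  have hev_pos : ∀ i, 0 < ev i := fun i => hσ.eigenvalues_pos i
  have hev_sum : ∑ i, ev i = 1 := by
    have h1 := trace_eq_sum_eig σ hH
    rw [htr] at h1
    have h2 := congrArg Complex.re h1.symm
    rw [Complex.re_sum] at h2
    simpa using h2
  have hev_le1 : ∀ i, ev i ≤ 1 := by
    intro i
    rw [← hev_sum]
    exact Finset.single_le_sum (fun j _ => (hev_pos j).le) (Finset.mem_univ i)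
  -- the conjugating matrix
  have hX : ((1 : Matrix (ZMod p) (ZMod p) ℂ) ⊗ₖ σ).hpow r
      = ((1 : Matrix (ZMod p) (ZMod p) ℂ) ⊗ₖ V)
        * Matrix.diagonal (fun x : ZMod p × (ZMod p × ZMod p) => ((ev x.2 ^ r : ℝ) : ℂ))
        * ((1 : Matrix (ZMod p) (ZMod p) ℂ) ⊗ₖ V)ᴴ :=
    hpow_of_decomp _ hUmem (fun x : ZMod p × (ZMod p × ZMod p) => ev x.2) hdecA r
  have hXher : (((1 : Matrix (ZMod p) (ZMod p) ℂ) ⊗ₖ σ).hpow r).IsHermitian := by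
    rw [hX]; exact isHermitian_decomp _ _
  have hρpsd := rhoAE_psd p P
  set X : Matrix (ZMod p × (ZMod p × ZMod p)) (ZMod p × (ZMod p × ZMod p)) ℂ :=
    ((1 : Matrix (ZMod p) (ZMod p) ℂ) ⊗ₖ σ).hpow r with hXdef
  have hMpsd : (X * rhoAE p P * X).PosSemidef := by
    have h := hρpsd.mul_mul_conjTranspose_same X
    rwa [hXher] at h
  -- X * X - 1 is PSD
  have hUU : (((1 : Matrix (ZMod p) (ZMod p) ℂ) ⊗ₖ V))ᴴ
      * ((1 : Matrix (ZMod p) (ZMod p) ℂ) ⊗ₖ V) = 1 := by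
    rw [← Matrix.star_eq_conjTranspose]
    exact Matrix.mem_unitaryGroup_iff'.mp hUmem
  have hXX : X * X
      = ((1 : Matrix (ZMod p) (ZMod p) ℂ) ⊗ₖ V)
        * Matrix.diagonal (fun x : ZMod p × (ZMod p × ZMod p) =>
            ((ev x.2 ^ r * ev x.2 ^ r : ℝ) : ℂ))
        * ((1 : Matrix (ZMod p) (ZMod p) ℂ) ⊗ₖ V)ᴴ := by
    rw [hX]
    set U := (1 : Matrix (ZMod p) (ZMod p) ℂ) ⊗ₖ V
    set D := Matrix.diagonal (fun x : ZMod p × (ZMod p × ZMod p) => ((ev x.2 ^ r : ℝ) : ℂ))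
    calc (U * D * Uᴴ) * (U * D * Uᴴ)
        = U * (D * ((Uᴴ * U) * (D * Uᴴ))) := by simp only [Matrix.mul_assoc]
      _ = U * (D * (D * Uᴴ)) := by rw [hUU, Matrix.one_mul]
      _ = U * ((D * D) * Uᴴ) := by rw [Matrix.mul_assoc]
      _ = U * (D * D) * Uᴴ := by rw [← Matrix.mul_assoc]
      _ = _ := by
          rw [show D * D = Matrix.diagonal (fun x : ZMod p × (ZMod p × ZMod p) =>
              ((ev x.2 ^ r * ev x.2 ^ r : ℝ) : ℂ)) from ?_]
          rw [Matrix.diagonal_mul_diagonal]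
          congr 1
          funext x
          push_cast
          ring
  have hsub_psd : (X * X - 1).PosSemidef := by
    rw [hXX]
    have hone : (1 : Matrix (ZMod p × (ZMod p × ZMod p)) (ZMod p × (ZMod p × ZMod p)) ℂ)
        = ((1 : Matrix (ZMod p) (ZMod p) ℂ) ⊗ₖ V)
          * Matrix.diagonal (fun _ : ZMod p × (ZMod p × ZMod p) => ((1 : ℝ) : ℂ))
          * ((1 : Matrix (ZMod p) (ZMod p) ℂ) ⊗ₖ V)ᴴ := by
      have hUU' : ((1 : Matrix (ZMod p) (ZMod p) ℂ) ⊗ₖ V)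
          * (((1 : Matrix (ZMod p) (ZMod p) ℂ) ⊗ₖ V))ᴴ = 1 := by
        rw [← Matrix.star_eq_conjTranspose]
        exact Matrix.mem_unitaryGroup_iff.mp hUmem
      rw [show Matrix.diagonal (fun _ : ZMod p × (ZMod p × ZMod p) => ((1 : ℝ) : ℂ)) = 1 by
        simp, Matrix.mul_one, hUU']
    rw [hone, ← Matrix.sub_mul, ← Matrix.mul_sub]
    have hdd : (Matrix.diagonal fun x : ZMod p × (ZMod p × ZMod p) =>
            ((ev x.2 ^ r * ev x.2 ^ r : ℝ) : ℂ))
          - Matrix.diagonal (fun _ : ZMod p × (ZMod p × ZMod p) => ((1 : ℝ) : ℂ))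
        = Matrix.diagonal (fun x : ZMod p × (ZMod p × ZMod p) =>
            ((ev x.2 ^ r * ev x.2 ^ r - 1 : ℝ) : ℂ)) := by
      rw [Matrix.diagonal_sub]
      congr 1
      funext x
      push_cast
      ring
    rw [hdd]
    apply psd_decomp
    intro x
    have h1 : 1 ≤ ev x.2 ^ r :=
      Real.one_le_rpow_of_pos_of_le_one_of_nonpos (hev_pos x.2) (hev_le1 x.2) hrle
    nlinarith
  -- trace of the sandwiched matrix is ≥ 1
  have htrM : 1 ≤ (X * rhoAE p P * X).trace.re := by
    have hcyc : (X * rhoAE p P * X).trace = ((X * X) * rhoAE p P).trace :=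
      Matrix.trace_mul_cycle X (rhoAE p P) X
    have hsplit : (X * X) * rhoAE p P = rhoAE p P + (X * X - 1) * rhoAE p P := by
      rw [Matrix.sub_mul, Matrix.one_mul, add_sub_cancel]
    have htrρ : (rhoAE p P).trace = 1 := rhoAE_trace p P hP0 hP1
    have hge := trace_mul_psd_re_nonneg hsub_psd hρpsd
    rw [hcyc, hsplit, Matrix.trace_add]
    have : (rhoAE p P).trace.re = 1 := by rw [htrρ]; simp
    rw [Complex.add_re, this]
    linarith
  -- eigenvalues of M
  set μ : ZMod p × (ZMod p × ZMod p) → ℝ := hMpsd.1.eigenvalues with hμdef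
  have hμnn : ∀ i, 0 ≤ μ i := fun i => hMpsd.eigenvalues_nonneg i
  have hμsum : ∑ i, μ i = (X * rhoAE p P * X).trace.re := by
    have h1 := trace_eq_sum_eig _ hMpsd.1
    have h2 := congrArg Complex.re h1
    rw [Complex.re_sum] at h2
    simpa using h2.symm
  -- sandwichTr equals sum of μ i ^ (1 + t)
  have hsand : sandwichTr t (rhoAE p P) ((1 : Matrix (ZMod p) (ZMod p) ℂ) ⊗ₖ σ)
      = ∑ i, μ i ^ (1 + t) := by
    unfold sandwichTr
    rw [show ((1 : Matrix (ZMod p) (ZMod p) ℂ) ⊗ₖ σ).hpow (-(t / (2 * (1 + t)))) = X from rfl]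
    rw [trace_hpow _ hMpsd.1, Complex.re_sum]
    exact Finset.sum_congr rfl fun i _ => by simp; rfl
  rw [hsand]
  -- pick the maximal eigenvalue
  obtain ⟨i₀, -, hmax⟩ := Finset.exists_max_image Finset.univ μ ⟨default, Finset.mem_univ _⟩
  set d : ℕ := Fintype.card (ZMod p × (ZMod p × ZMod p)) with hddef
  have hdpos : 0 < (d : ℝ) := by
    have : 0 < d := Fintype.card_pos
    exact_mod_cast this
  have hμ₀ : (d : ℝ)⁻¹ ≤ μ i₀ := by
    have hsum_le : ∑ i, μ i ≤ d * μ i₀ := by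
      calc ∑ i, μ i ≤ ∑ _i : ZMod p × (ZMod p × ZMod p), μ i₀ :=
            Finset.sum_le_sum fun i _ => hmax i (Finset.mem_univ i)
        _ = d * μ i₀ := by rw [Finset.sum_const, Finset.card_univ, nsmul_eq_mul]
    have h1 : (1 : ℝ) ≤ d * μ i₀ := by
      calc (1 : ℝ) ≤ (X * rhoAE p P * X).trace.re := htrM
        _ = ∑ i, μ i := hμsum.symm
        _ ≤ d * μ i₀ := hsum_le
    rw [inv_eq_one_div, div_le_iff₀ hdpos]
    linarith [mul_comm (d : ℝ) (μ i₀)]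
  calc ((d : ℝ))⁻¹ ^ (1 + t) ≤ μ i₀ ^ (1 + t) := by
        apply Real.rpow_le_rpow (by positivity) hμ₀ (by linarith)
    _ ≤ ∑ i, μ i ^ (1 + t) :=
        Finset.single_le_sum (fun i _ => Real.rpow_nonneg (hμnn i) _) (Finset.mem_univ i₀)

end AuxLower

/-- Lower bound on the conditional sandwiched Rényi entropy of the
`AE` marginal of the purification of a Bell-diagonal state. -/
theorem HtildeUp_lower_bound
    (p : ℕ) [Fact p.Prime] (P : ZMod p × ZMod p → ℝ) (hP : IsProbDist P)
    (t : ℝ) (ht : 0 < t) :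
    Real.logb 2 p
      - ((1 + t) / t) * Real.logb 2 (∑ xz : ZMod p × ZMod p, P xz ^ (1 / (1 + t)))
    ≤ HtildeUp t
        (Matrix.of fun (ae ae' : ZMod p × (ZMod p × ZMod p)) =>
          ∑ b : ZMod p,
            Matrix.vecMulVec (PsiVec p P) (star (PsiVec p P))
              (ae.1, b, ae.2) (ae'.1, b, ae'.2)) := by
  classical
  obtain ⟨hP0, hP1⟩ := hP
  have hpprime : p.Prime := Fact.out
  have hppos : 0 < (p : ℝ) := by exact_mod_cast hpprime.pos
  have hpne : (p : ℝ) ≠ 0 := ne_of_gt hppos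
  have h1t : (0 : ℝ) < 1 + t := by linarith
  have hex : ∃ e : ZMod p × ZMod p, 0 < P e := by
    by_contra h
    push_neg at h
    have hle : ∑ e : ZMod p × ZMod p, P e ≤ 0 := Finset.sum_nonpos fun e _ => h e
    rw [hP1] at hle
    linarith
  obtain ⟨e₀, he₀⟩ := hex
  set S : ℝ := ∑ xz : ZMod p × ZMod p, P xz ^ (1 / (1 + t)) with hSdef
  have hSpos : 0 < S := by
    refine Finset.sum_pos' (fun e _ => Real.rpow_nonneg (hP0 e) _)
      ⟨e₀, Finset.mem_univ _, Real.rpow_pos_of_pos he₀ _⟩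
  show Real.logb 2 p - ((1 + t) / t) * Real.logb 2 S ≤ HtildeUp t (rhoAE p P)
  unfold HtildeUp
  set F : {σ : Matrix (ZMod p × ZMod p) (ZMod p × ZMod p) ℂ // σ.PosDef ∧ σ.trace = 1} → ℝ :=
    fun σ => Dtilde t (rhoAE p P) ((1 : Matrix (ZMod p) (ZMod p) ℂ) ⊗ₖ σ.1) with hFdef
  have hbdd : BddBelow (Set.range F) := by
    refine ⟨(1 / t) * Real.logb 2
      (((Fintype.card (ZMod p × (ZMod p × ZMod p)) : ℝ))⁻¹ ^ (1 + t)), ?_⟩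
    rintro x ⟨σ, rfl⟩
    show (1 / t) * Real.logb 2 (((Fintype.card (ZMod p × (ZMod p × ZMod p)) : ℝ))⁻¹ ^ (1 + t))
      ≤ (1 / t) * Real.logb 2 (sandwichTr t (rhoAE p P)
          ((1 : Matrix (ZMod p) (ZMod p) ℂ) ⊗ₖ σ.1))
    have hbound := sandwichTr_ge p P hP0 hP1 t ht σ.1 σ.2.1 σ.2.2
    have hcard0 : (0 : ℝ) < (Fintype.card (ZMod p × (ZMod p × ZMod p)) : ℝ) := by
      have : 0 < Fintype.card (ZMod p × (ZMod p × ZMod p)) := Fintype.card_pos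
      exact_mod_cast this
    have hcard : (0 : ℝ) < ((Fintype.card (ZMod p × (ZMod p × ZMod p)) : ℝ))⁻¹ ^ (1 + t) :=
      Real.rpow_pos_of_pos (by positivity) _
    exact mul_le_mul_of_nonneg_left
      (Real.logb_le_logb_of_le one_lt_two hcard hbound) (by positivity)
  have hkey : ∀ η : ℝ, 0 < η →
      (⨅ σ, F σ) ≤ ((1 + t) / t) * Real.logb 2 S - Real.logb 2 p + η := by
    intro η hη
    have hspos : 0 < t / (2 * (1 + t)) := by positivity
    have hsne : t / (2 * (1 + t)) ≠ 0 := ne_of_gt hspos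
    set δ : ℝ := η * t / (1 + t) with hδdef
    have hδpos : 0 < δ := by positivity
    set κ : ℝ := (2 : ℝ) ^ (-(δ / (2 * (t / (2 * (1 + t)))))) with hκdef
    have hκpos : 0 < κ := Real.rpow_pos_of_pos two_pos _
    have hκlt1 : κ < 1 := by
      apply Real.rpow_lt_one_of_one_lt_of_neg one_lt_two
      have : 0 < δ / (2 * (t / (2 * (1 + t)))) := by positivity
      linarith
    set q : ZMod p × ZMod p → ℝ := fun e => κ * P e + (1 - κ) * ((p : ℝ) ^ 2)⁻¹ with hqdef
    have hqpos : ∀ e, 0 < q e := by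
      intro e
      have h1 : 0 ≤ κ * P e := mul_nonneg hκpos.le (hP0 e)
      have h2 : 0 < (1 - κ) * ((p : ℝ) ^ 2)⁻¹ := by
        apply mul_pos (by linarith)
        positivity
      show 0 < κ * P e + (1 - κ) * ((p : ℝ) ^ 2)⁻¹
      linarith
    have hqsum : ∑ e, q e = 1 := by
      show ∑ e : ZMod p × ZMod p, (κ * P e + (1 - κ) * ((p : ℝ) ^ 2)⁻¹) = 1
      rw [Finset.sum_add_distrib, ← Finset.mul_sum, hP1, Finset.sum_const, Finset.card_univ]
      have hcard : Fintype.card (ZMod p × ZMod p) = p * p := by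
        rw [Fintype.card_prod, ZMod.card]
      rw [hcard, nsmul_eq_mul]
      push_cast
      field_simp
      ring
    have hσPD : (Matrix.diagonal (fun e : ZMod p × ZMod p => (q e : ℂ))).PosDef := by
      rw [Matrix.posDef_diagonal_iff]
      intro i
      exact Complex.zero_lt_real.mpr (hqpos i)
    have hσtr : (Matrix.diagonal (fun e : ZMod p × ZMod p => (q e : ℂ))).trace = 1 := by
      rw [Matrix.trace_diagonal, ← Complex.ofReal_sum, hqsum, Complex.ofReal_one]
    set N : ℝ := ∑ e, (q e ^ (-(t / (2 * (1 + t))))) ^ 2 * P e with hNdef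
    have hNpos : 0 < N := by
      refine Finset.sum_pos' (fun e _ => mul_nonneg (sq_nonneg _) (hP0 e))
        ⟨e₀, Finset.mem_univ _, ?_⟩
      exact mul_pos (pow_pos (Real.rpow_pos_of_pos (hqpos e₀) _) 2) he₀
    have hNpos' : 0 < (p : ℝ)⁻¹ * N := by positivity
    have hclosed := sandwichTr_diag p P hP0 t ht q hqpos hNpos'
    -- bound N ≤ 2^δ * S
    have hNle : N ≤ (2 : ℝ) ^ δ * S := by
      rw [hNdef, hSdef, Finset.mul_sum]
      refine Finset.sum_le_sum fun e _ => ?_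
      rcases (hP0 e).lt_or_eq with hPe | hPe
      · -- 0 < P e
        have hqe : κ * P e ≤ q e := by
          have h2 : 0 ≤ (1 - κ) * ((p : ℝ) ^ 2)⁻¹ := by
            apply mul_nonneg (by linarith)
            positivity
          show κ * P e ≤ κ * P e + (1 - κ) * ((p : ℝ) ^ 2)⁻¹
          linarith
        have hκP : 0 < κ * P e := mul_pos hκpos hPe
        have h1 : q e ^ (-(t / (2 * (1 + t)))) ≤ (κ * P e) ^ (-(t / (2 * (1 + t)))) :=
          Real.rpow_le_rpow_of_nonpos hκP hqe (by linarith [hspos])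
        have h2 : (q e ^ (-(t / (2 * (1 + t))))) ^ 2 ≤ ((κ * P e) ^ (-(t / (2 * (1 + t))))) ^ 2 :=
          pow_le_pow_left₀ (Real.rpow_nonneg (hqpos e).le _) h1 2
        have hmulr : (κ * P e) ^ (-(t / (2 * (1 + t))))
            = κ ^ (-(t / (2 * (1 + t)))) * P e ^ (-(t / (2 * (1 + t)))) :=
          Real.mul_rpow hκpos.le hPe.le
        have hκr : κ ^ (-(t / (2 * (1 + t)))) = (2 : ℝ) ^ (δ / 2) := by
          rw [hκdef, ← Real.rpow_mul (by norm_num : (0:ℝ) ≤ 2)]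
          congr 1
          field_simp
        have hsq2 : ((2 : ℝ) ^ (δ / 2)) ^ 2 = (2 : ℝ) ^ δ := by
          rw [sq, ← Real.rpow_add two_pos]
          norm_num
        have hPr : (P e ^ (-(t / (2 * (1 + t))))) ^ 2 * P e = P e ^ (1 / (1 + t)) := by
          rw [sq, ← Real.rpow_add hPe]
          nth_rewrite 2 [show P e = P e ^ (1:ℝ) from (Real.rpow_one _).symm]
          rw [← Real.rpow_add hPe]
          congr 1
          field_simp
          ring
        calc (q e ^ (-(t / (2 * (1 + t))))) ^ 2 * P e
            ≤ ((κ * P e) ^ (-(t / (2 * (1 + t))))) ^ 2 * P e :=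
              mul_le_mul_of_nonneg_right h2 (hP0 e)
          _ = (2 : ℝ) ^ δ * ((P e ^ (-(t / (2 * (1 + t))))) ^ 2 * P e) := by
              rw [hmulr, mul_pow, hκr, hsq2]
              ring
          _ = (2 : ℝ) ^ δ * P e ^ (1 / (1 + t)) := by rw [hPr]
      · -- P e = 0
        rw [← hPe, mul_zero]
        have : (0:ℝ) ^ ((1:ℝ) / (1 + t)) = 0 := Real.zero_rpow (by positivity)
        rw [this, mul_zero]
    -- evaluate F at the diagonal state
    have hstep : (⨅ σ, F σ) ≤ F ⟨Matrix.diagonal (fun e : ZMod p × ZMod p => (q e : ℂ)),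
        hσPD, hσtr⟩ := ciInf_le hbdd _
    have hFval : F ⟨Matrix.diagonal (fun e : ZMod p × ZMod p => (q e : ℂ)), hσPD, hσtr⟩
        = (1 / t) * Real.logb 2
            (((p : ℝ)⁻¹ * N) ^ t * ((p : ℝ) * ((p : ℝ)⁻¹ * N))) := by
      show (1 / t) * Real.logb 2 (sandwichTr t (rhoAE p P)
          ((1 : Matrix (ZMod p) (ZMod p) ℂ) ⊗ₖ
            Matrix.diagonal (fun e : ZMod p × ZMod p => (q e : ℂ)))) = _
      rw [hclosed]
    have hlogalg : (1 / t) * Real.logb 2 (((p : ℝ)⁻¹ * N) ^ t * ((p : ℝ) * ((p : ℝ)⁻¹ * N)))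
        = ((1 + t) / t) * Real.logb 2 N - Real.logb 2 p := by
      have hpn : (p : ℝ) * ((p : ℝ)⁻¹ * N) = N := by field_simp
      have hpNpos : 0 < ((p : ℝ)⁻¹ * N) ^ t := Real.rpow_pos_of_pos hNpos' _
      rw [hpn, Real.logb_mul (ne_of_gt hpNpos) (ne_of_gt hNpos),
        Real.logb_rpow_eq_mul_logb_of_pos hNpos']
      have hdiv : (p : ℝ)⁻¹ * N = N / (p : ℝ) := by ring
      rw [hdiv, Real.logb_div (ne_of_gt hNpos) hpne]
      field_simp
      ring
    have hmono : Real.logb 2 N ≤ Real.logb 2 ((2 : ℝ) ^ δ * S) :=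
      Real.logb_le_logb_of_le one_lt_two hNpos hNle
    have hlog2 : Real.logb 2 ((2 : ℝ) ^ δ * S) = δ + Real.logb 2 S := by
      rw [Real.logb_mul (ne_of_gt (Real.rpow_pos_of_pos two_pos δ)) (ne_of_gt hSpos),
        Real.logb_rpow (by norm_num : (0:ℝ) < 2) (by norm_num : (2:ℝ) ≠ 1)]
    have hcoef : 0 ≤ (1 + t) / t := by positivity
    have hfin : ((1 + t) / t) * (δ + Real.logb 2 S) - Real.logb 2 p
        = ((1 + t) / t) * Real.logb 2 S - Real.logb 2 p + η := by
      rw [hδdef]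
      field_simp
      ring
    calc (⨅ σ, F σ) ≤ F ⟨_, hσPD, hσtr⟩ := hstep
      _ = (1 / t) * Real.logb 2 (((p : ℝ)⁻¹ * N) ^ t * ((p : ℝ) * ((p : ℝ)⁻¹ * N))) := hFval
      _ = ((1 + t) / t) * Real.logb 2 N - Real.logb 2 p := hlogalg
      _ ≤ ((1 + t) / t) * Real.logb 2 ((2 : ℝ) ^ δ * S) - Real.logb 2 p := by
          have := mul_le_mul_of_nonneg_left hmono hcoef
          linarith
      _ = ((1 + t) / t) * (δ + Real.logb 2 S) - Real.logb 2 p := by rw [hlog2]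
      _ = ((1 + t) / t) * Real.logb 2 S - Real.logb 2 p + η := hfin
  have hT : (⨅ σ, F σ) ≤ ((1 + t) / t) * Real.logb 2 S - Real.logb 2 p := by
    by_contra hcon
    push_neg at hcon
    have hη : 0 < ((⨅ σ, F σ) - (((1 + t) / t) * Real.logb 2 S - Real.logb 2 p)) / 2 := by
      linarith
    have := hkey _ hη
    linarith
  linarith

end
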